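/- Let (t_k)_{k≥1} be a sequence of convergent type: t_k > 0, t_0 = 0, the series A_∞(m) = 1 + Σ_{r≥1} t_m···t_{m+r-1} converge, and B_∞(m) = t_{m+1} + (t_{m+1} − t_m − 1)·t_{m+2}·A_∞(m+3) ≥ 0 for all m ≥ 0. Then A_∞(1) ≥ A_∞(2) > A_∞(3) > A_∞(4) > ..., i.e., the sequence (A_∞(m))_{m≥1} is weakly decreasing at the first step and strictly decreasing for m ≥ 2. -/
import Mathlib


/-- `A_∞(m) = 1 + Σ_{r ≥ 1} t m ⬝ t (m+1) ⋯ t (m+r-1)`. -/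
noncomputable def Ainf (t : ℕ → ℝ) (m : ℕ) : ℝ :=
  1 + ∑' r : ℕ, ∏ j ∈ Finset.range (r + 1), t (m + j)

/-- `B_∞(m) = t (m+1) + (t (m+1) − t m − 1) ⬝ t (m+2) ⬝ A_∞(m+3)`. -/
noncomputable def Binf (t : ℕ → ℝ) (m : ℕ) : ℝ :=
  t (m + 1) + (t (m + 1) - t m - 1) * t (m + 2) * Ainf t (m + 3)

private lemma Ainf_rec (t : ℕ → ℝ)
    (hsum : ∀ m, 1 ≤ m → Summable (fun r : ℕ => ∏ j ∈ Finset.range (r + 1), t (m + j)))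
    (m : ℕ) (hm : 1 ≤ m) : Ainf t m = 1 + t m * Ainf t (m + 1) := by
  have key : ∀ r : ℕ, ∏ j ∈ Finset.range (r + 1 + 1), t (m + j)
      = t m * ∏ j ∈ Finset.range (r + 1), t (m + 1 + j) := by
    intro r
    rw [Finset.prod_range_succ']
    simp only [Nat.add_zero]
    rw [mul_comm]
    congr 1
    refine Finset.prod_congr rfl fun j _ => ?_
    congr 1
    omega
  unfold Ainf
  rw [Summable.tsum_eq_zero_add (hsum m hm)]
  simp only [key]
  rw [tsum_mul_left]
  simp only [zero_add, Finset.prod_range_one, Nat.add_zero]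
  ring

private lemma Ainf_ge_one (t : ℕ → ℝ) (htpos : ∀ k, 1 ≤ k → 0 < t k)
    (m : ℕ) (hm : 1 ≤ m) : 1 ≤ Ainf t m := by
  have h : 0 ≤ ∑' r : ℕ, ∏ j ∈ Finset.range (r + 1), t (m + j) :=
    tsum_nonneg fun r => Finset.prod_nonneg fun j _ => (htpos _ (by omega)).le
  unfold Ainf
  linarith

private lemma Ainf_key (t : ℕ → ℝ)
    (hsum : ∀ m, 1 ≤ m → Summable (fun r : ℕ => ∏ j ∈ Finset.range (r + 1), t (m + j)))
    (m : ℕ) :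
    Ainf t (m + 1) - Ainf t (m + 2) = Binf t m + t m * t (m + 2) * Ainf t (m + 3) := by
  have e1 : Ainf t (m + 1) = 1 + t (m + 1) * Ainf t (m + 1 + 1) :=
    Ainf_rec t hsum (m + 1) (by omega)
  have e2 : Ainf t (m + 2) = 1 + t (m + 2) * Ainf t (m + 2 + 1) :=
    Ainf_rec t hsum (m + 2) (by omega)
  simp only [show m + 1 + 1 = m + 2 by omega, show m + 2 + 1 = m + 3 by omega] at e1 e2
  rw [e1, e2]
  unfold Binf
  ring

/-- For a sequence of convergent type, the sequence `(A_∞(m))_{m ≥ 1}` is weakly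
decreasing at the first step and strictly decreasing afterwards:
`A_∞(1) ≥ A_∞(2) > A_∞(3) > ⋯`. -/
theorem Ainf_decreasing (t : ℕ → ℝ) (ht0 : t 0 = 0) (htpos : ∀ k, 1 ≤ k → 0 < t k)
    (hsum : ∀ m, 1 ≤ m → Summable (fun r : ℕ => ∏ j ∈ Finset.range (r + 1), t (m + j)))
    (hB : ∀ m : ℕ, 0 ≤ Binf t m) :
    Ainf t 2 ≤ Ainf t 1 ∧ ∀ m, 2 ≤ m → Ainf t (m + 1) < Ainf t m := by
  constructor
  · have h := Ainf_key t hsum 0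
    have hB0 := hB 0
    simp only [ht0] at h
    linarith [h]
  · intro m hm
    obtain ⟨k, rfl⟩ : ∃ k, m = k + 1 := ⟨m - 1, by omega⟩
    have h := Ainf_key t hsum k
    have hpos : 0 < t k * t (k + 2) * Ainf t (k + 3) := by
      have h1 := htpos k (by omega)
      have h2 := htpos (k + 2) (by omega)
      have h3 := Ainf_ge_one t htpos (k + 3) (by omega)
      exact mul_pos (mul_pos h1 h2) (lt_of_lt_of_le one_pos h3)
    have hBk := hB k
    have : k + 1 + 1 = k + 2 := by omega
    rw [this]
    linarith
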